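/- With notation as in the contraction construction, the inclusion A_t ↪ A[√t^{±1}] extends to an isomorphism of k[√t^{±1}]-algebras A_t ⊗_{k[t^{±1}]} k[√t^{±1}] ≅ A[√t^{±1}]. -/

import Mathlib

open LaurentPolynomial

/-- The contraction algebra `𝐀`. -/
noncomputable def contraction (k A : Type*) [CommRing k] [CommRing A] [Algebra k A]
    (θ : A →ₐ[k] A) : Subalgebra k (LaurentPolynomial A) :=
  Algebra.adjoin k (insert (T 2)
    ({f | ∃ a, θ a = a ∧ f = C a} ∪ {f | ∃ a, θ a = -a ∧ f = C a * T (-1)}))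

/-- `A_t`: the `k[t^{±1}]`-subalgebra of `A[√t^{±1}]` generated by `A^θ` and
`(1/√t)·A^{-θ}`, i.e. `A^θ[t^{±1}] ⊕ (1/√t)A^{-θ} ⊗ k[t^{±1}]`. -/
noncomputable def contractionT (k A : Type*) [CommRing k] [CommRing A] [Algebra k A]
    (θ : A →ₐ[k] A) : Subalgebra k (LaurentPolynomial A) :=
  Algebra.adjoin k (insert (T 2) (insert (T (-2))
    ({f | ∃ a, θ a = a ∧ f = C a} ∪ {f | ∃ a, θ a = -a ∧ f = C a * T (-1)})))

section Aux

variable {k A : Type*} [CommRing k] [CommRing A] [Algebra k A]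

/-- The sign character `n ↦ (-1)^n T n`. -/
noncomputable def sgnT : Multiplicative ℤ →* LaurentPolynomial A where
  toFun n := C (((Multiplicative.toAdd n).negOnePow : ℤ) : A) * T (Multiplicative.toAdd n)
  map_one' := by
    simp [Int.negOnePow_zero]
  map_mul' m n := by
    simp only [toAdd_mul, Int.negOnePow_add, T_add, Units.val_mul, Int.cast_mul, map_mul]
    ring

/-- The involution `C a * T n ↦ (-1)^n C (θ a) * T n` of `A[√t^{±1}]`. -/
noncomputable def sigmaT (θ : A →ₐ[k] A) : LaurentPolynomial A →ₐ[k] LaurentPolynomial A :=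
  AddMonoidAlgebra.liftNCAlgHom ((IsScalarTower.toAlgHom k A (LaurentPolynomial A)).comp θ)
    sgnT fun _ _ => Commute.all _ _

theorem sigmaT_single (θ : A →ₐ[k] A) (n : ℤ) (a : A) :
    sigmaT θ (AddMonoidAlgebra.single n a) = C (((n.negOnePow : ℤ) : A) * θ a) * T n := by
  have h : sigmaT θ (AddMonoidAlgebra.single n a)
      = AddMonoidAlgebra.liftNC
          (((IsScalarTower.toAlgHom k A (LaurentPolynomial A)).comp θ :
              A →+* LaurentPolynomial A) : A →+ LaurentPolynomial A)
          (sgnT : Multiplicative ℤ →* LaurentPolynomial A)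
          (AddMonoidAlgebra.single n a) := rfl
  rw [h, AddMonoidAlgebra.liftNC_single]
  show (algebraMap A (LaurentPolynomial A)) (θ a) * sgnT (Multiplicative.ofAdd n) = _
  rw [← C_eq_algebraMap]
  show C (θ a) * (C ((((Multiplicative.toAdd (Multiplicative.ofAdd n)).negOnePow : ℤ) : A))
      * T (Multiplicative.toAdd (Multiplicative.ofAdd n))) = _
  rw [toAdd_ofAdd, map_mul]
  ring

theorem sigmaT_C_mul_T (θ : A →ₐ[k] A) (n : ℤ) (a : A) :
    sigmaT θ (C a * T n) = C (((n.negOnePow : ℤ) : A) * θ a) * T n := by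
  rw [← single_eq_C_mul_T]
  exact sigmaT_single θ n a

theorem sigmaT_T (θ : A →ₐ[k] A) (n : ℤ) :
    sigmaT θ (T n) = C (((n.negOnePow : ℤ) : A)) * T n := by
  have := sigmaT_C_mul_T θ n 1
  simpa using this

theorem negOnePow_cast_sq (n : ℤ) :
    (((n.negOnePow : ℤ) : A)) * (((n.negOnePow : ℤ) : A)) = 1 := by
  rw [← Int.cast_mul, ← Units.val_mul, Int.units_mul_self, Units.val_one, Int.cast_one]

theorem sigmaT_sigmaT (θ : A →ₐ[k] A) (hθ : θ.comp θ = AlgHom.id k A)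
    (f : LaurentPolynomial A) : sigmaT θ (sigmaT θ f) = f := by
  induction f using LaurentPolynomial.induction_on' with
  | add p q hp hq => simp [hp, hq]
  | C_mul_T n a =>
    rw [sigmaT_C_mul_T, sigmaT_C_mul_T]
    have hθa : θ (θ a) = a := congrFun (congrArg (fun g => g.toFun) hθ) a
    have h1 : θ (((n.negOnePow : ℤ) : A) * θ a) = ((n.negOnePow : ℤ) : A) * a := by
      rw [map_mul, map_intCast, hθa]
    rw [h1, ← mul_assoc, negOnePow_cast_sq, one_mul]

theorem T_two_mul_mem (θ : A →ₐ[k] A) (m : ℤ) :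
    (T (2 * m) : LaurentPolynomial A) ∈ contractionT k A θ := by
  have h2 : (T 2 : LaurentPolynomial A) ∈ contractionT k A θ :=
    Algebra.subset_adjoin (Set.mem_insert _ _)
  have h2' : (T (-2) : LaurentPolynomial A) ∈ contractionT k A θ :=
    Algebra.subset_adjoin (Set.mem_insert_of_mem _ (Set.mem_insert _ _))
  rcases le_or_gt 0 m with hm | hm
  · have harg : (m.toNat : ℤ) * 2 = 2 * m := by
      rw [Int.toNat_of_nonneg hm]; ring
    have : (T (2 * m) : LaurentPolynomial A) = T 2 ^ m.toNat := by
      rw [T_pow, harg]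
    rw [this]; exact pow_mem h2 _
  · have harg : ((-m).toNat : ℤ) * -2 = 2 * m := by
      rw [Int.toNat_of_nonneg (neg_nonneg.mpr hm.le)]; ring
    have : (T (2 * m) : LaurentPolynomial A) = T (-2) ^ (-m).toNat := by
      rw [T_pow, harg]
    rw [this]; exact pow_mem h2' _

theorem mem_C_mul_T (θ : A →ₐ[k] A) (n : ℤ) (b : A)
    (hb : θ b = (((n.negOnePow : ℤ) : A)) * b) :
    C b * T n ∈ contractionT k A θ := by
  rcases Int.even_or_odd n with ⟨m, hm⟩ | ⟨m, hm⟩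
  · have hsgn : n.negOnePow = 1 := Int.negOnePow_even n ⟨m, hm⟩
    rw [hsgn] at hb
    simp only [Units.val_one, Int.cast_one, one_mul] at hb
    have hC : (C b : LaurentPolynomial A) ∈ contractionT k A θ :=
      Algebra.subset_adjoin (Set.mem_insert_of_mem _ (Set.mem_insert_of_mem _
        (Or.inl ⟨b, hb, rfl⟩)))
    have hT : (T n : LaurentPolynomial A) ∈ contractionT k A θ := by
      have : n = 2 * m := by omega
      rw [this]; exact T_two_mul_mem θ m
    exact mul_mem hC hT
  · have hsgn : n.negOnePow = -1 := Int.negOnePow_odd n ⟨m, hm⟩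
    rw [hsgn] at hb
    simp only [Units.val_neg, Units.val_one, Int.cast_neg, Int.cast_one, neg_one_mul] at hb
    have hgen : (C b * T (-1) : LaurentPolynomial A) ∈ contractionT k A θ :=
      Algebra.subset_adjoin (Set.mem_insert_of_mem _ (Set.mem_insert_of_mem _
        (Or.inr ⟨b, hb, rfl⟩)))
    have hT : (T (2 * (m + 1)) : LaurentPolynomial A) ∈ contractionT k A θ :=
      T_two_mul_mem θ (m + 1)
    have hEq : C b * T n = (C b * T (-1)) * T (2 * (m + 1)) := by
      have harg : (-1 : ℤ) + 2 * (m + 1) = n := by rw [hm]; ring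
      rw [mul_assoc, ← T_add, harg]
    rw [hEq]
    exact mul_mem hgen hT

end Aux

/-!
STATEMENT 2: the inclusion `A_t ↪ A[√t^{±1}]` extends to an isomorphism of
`k[√t^{±1}]`-algebras `A_t ⊗_{k[t^{±1}]} k[√t^{±1}] ≅ A[√t^{±1}]`.
Since `k[√t^{±1}]` is free over `k[t^{±1}]` with basis `{1, √t}`, this says
exactly that every element of `A[√t^{±1}]` is uniquely of the form
`g + √t·h` with `g, h ∈ A_t`. -/
theorem contractionT_baseChange_sqrt
    (k A : Type*) [CommRing k] [CommRing A] [Algebra k A] [Invertible (2 : k)]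
    (θ : A →ₐ[k] A) (hθ : θ.comp θ = AlgHom.id k A) :
    ∀ f : LaurentPolynomial A,
      ∃! p : ↥(contractionT k A θ) × ↥(contractionT k A θ),
        f = (p.1 : LaurentPolynomial A) + T 1 * (p.2 : LaurentPolynomial A) := by
  intro f
  letI : Invertible (2 : A) := by
    have : algebraMap k A 2 = 2 := by rw [map_ofNat]
    exact (Invertible.map (algebraMap k A) 2).copy _ this.symm
  letI : Invertible (2 : LaurentPolynomial A) := by
    have : algebraMap A (LaurentPolynomial A) 2 = 2 := by rw [map_ofNat]
    exact (Invertible.map (algebraMap A (LaurentPolynomial A)) 2).copy _ this.symm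
  have hinv2 : (⅟(2 : LaurentPolynomial A)) = C (⅟(2 : A)) := by
    apply invOf_eq_right_inv
    rw [← map_ofNat (C : A →+* LaurentPolynomial A) 2, ← map_mul, mul_invOf_self, map_one]
  have hθ2 : θ (⅟(2 : A)) = ⅟(2 : A) := by
    show θ (algebraMap k A (⅟(2 : k))) = algebraMap k A (⅟(2 : k))
    exact θ.commutes _
  have hθa : ∀ a, θ (θ a) = a := fun a => congrFun (congrArg (fun g => g.toFun) hθ) a
  -- membership of the symmetric part
  have mem1 : ∀ g : LaurentPolynomial A, ⅟(2:LaurentPolynomial A) * (g + sigmaT θ g)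
      ∈ contractionT k A θ := by
    intro g
    induction g using LaurentPolynomial.induction_on' with
    | add p q hp hq =>
      have : ⅟(2:LaurentPolynomial A) * (p + q + sigmaT θ (p + q))
          = ⅟(2:LaurentPolynomial A) * (p + sigmaT θ p)
            + ⅟(2:LaurentPolynomial A) * (q + sigmaT θ q) := by
        rw [map_add]; ring
      rw [this]; exact add_mem hp hq
    | C_mul_T n a =>
      rw [sigmaT_C_mul_T]
      have : ⅟(2:LaurentPolynomial A) * (C a * T n + C (((n.negOnePow : ℤ) : A) * θ a) * T n)
          = C (⅟(2:A) * (a + ((n.negOnePow : ℤ) : A) * θ a)) * T n := by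
        rw [hinv2]
        simp only [map_mul, map_add, map_intCast]
        ring
      rw [this]
      apply mem_C_mul_T θ
      simp only [map_mul, map_add, map_intCast, hθ2, hθa]
      have hsq := negOnePow_cast_sq (A := A) n
      linear_combination (-(⅟(2:A) * θ a)) * hsq
  -- membership of the antisymmetric part, shifted by T (-1)
  have mem2 : ∀ g : LaurentPolynomial A,
      T (-1) * (⅟(2:LaurentPolynomial A) * (g - sigmaT θ g)) ∈ contractionT k A θ := by
    intro g
    induction g using LaurentPolynomial.induction_on' with
    | add p q hp hq =>
      have : T (-1) * (⅟(2:LaurentPolynomial A) * (p + q - sigmaT θ (p + q)))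
          = T (-1) * (⅟(2:LaurentPolynomial A) * (p - sigmaT θ p))
            + T (-1) * (⅟(2:LaurentPolynomial A) * (q - sigmaT θ q)) := by
        rw [map_add]; ring
      rw [this]; exact add_mem hp hq
    | C_mul_T n a =>
      rw [sigmaT_C_mul_T]
      have : T (-1) * (⅟(2:LaurentPolynomial A)
            * (C a * T n - C (((n.negOnePow : ℤ) : A) * θ a) * T n))
          = C (⅟(2:A) * (a - ((n.negOnePow : ℤ) : A) * θ a)) * T (n - 1) := by
        rw [hinv2, T_sub]
        simp only [map_mul, map_sub, map_intCast]
        ring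
      rw [this]
      apply mem_C_mul_T θ
      have h1 : (n - 1).negOnePow = -n.negOnePow := by
        rw [Int.negOnePow_sub, Int.negOnePow_one]
        exact mul_neg_one _
      have hsgn : (((n - 1).negOnePow : ℤ) : A) = -(((n.negOnePow : ℤ) : A)) := by
        rw [h1, Units.val_neg, Int.cast_neg]
      rw [hsgn]
      simp only [map_mul, map_sub, map_intCast, hθ2, hθa]
      have hsq := negOnePow_cast_sq (A := A) n
      linear_combination (-(⅟(2:A) * θ a)) * hsq
  -- every element of contractionT is fixed by sigmaT
  have fixed : ∀ x ∈ contractionT k A θ, sigmaT θ x = x := by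
    intro x hx
    have hle : contractionT k A θ ≤ AlgHom.equalizer (sigmaT θ) (AlgHom.id k _) := by
      apply Algebra.adjoin_le
      rintro y (rfl | rfl | ⟨a, ha, rfl⟩ | ⟨a, ha, rfl⟩)
      · show sigmaT θ (T 2) = T 2
        rw [sigmaT_T]
        norm_num [Int.negOnePow_even 2 ⟨1, by ring⟩]
      · show sigmaT θ (T (-2)) = T (-2)
        rw [sigmaT_T]
        norm_num [Int.negOnePow_even (-2) ⟨-1, by ring⟩]
      · show sigmaT θ (C a) = C a
        have := sigmaT_C_mul_T θ 0 a
        simpa [ha] using this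
      · show sigmaT θ (C a * T (-1)) = C a * T (-1)
        rw [sigmaT_C_mul_T, ha]
        norm_num [Int.negOnePow_odd (-1) ⟨-1, by ring⟩]
    exact hle hx
  -- existence
  refine ⟨⟨⟨⅟(2:LaurentPolynomial A) * (f + sigmaT θ f), mem1 f⟩,
    ⟨T (-1) * (⅟(2:LaurentPolynomial A) * (f - sigmaT θ f)), mem2 f⟩⟩, ?_, ?_⟩
  · show f = ⅟(2:LaurentPolynomial A) * (f + sigmaT θ f)
      + T 1 * (T (-1) * (⅟(2:LaurentPolynomial A) * (f - sigmaT θ f)))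
    have hT : (T 1 * T (-1) : LaurentPolynomial A) = 1 := by
      rw [← T_add]; norm_num
    rw [← mul_assoc, hT, one_mul]
    have : ⅟(2:LaurentPolynomial A) * (f + sigmaT θ f)
        + ⅟(2:LaurentPolynomial A) * (f - sigmaT θ f)
        = (⅟(2:LaurentPolynomial A) * 2) * f := by ring
    rw [this, invOf_mul_self, one_mul]
  · rintro ⟨⟨g, hg⟩, ⟨h, hh⟩⟩ heq
    simp only at heq
    -- f = g + T 1 * h ; show g, h equal the canonical ones
    have hsg : sigmaT θ g = g := fixed g hg
    have hsh : sigmaT θ h = h := fixed h hh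
    have hσf : sigmaT θ f = g - T 1 * h := by
      rw [heq, map_add, hsg, map_mul, hsh]
      have : sigmaT θ (T 1) = -T 1 := by
        rw [sigmaT_T]
        norm_num [Int.negOnePow_odd 1 ⟨0, by ring⟩]
      rw [this]; ring
    have hgval : ⅟(2:LaurentPolynomial A) * (f + sigmaT θ f) = g := by
      rw [hσf, heq]
      have : (g + T 1 * h) + (g - T 1 * h) = 2 * g := by ring
      rw [this, ← mul_assoc, invOf_mul_self, one_mul]
    have hhval : T (-1) * (⅟(2:LaurentPolynomial A) * (f - sigmaT θ f)) = h := by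
      rw [hσf, heq]
      have h1 : (g + T 1 * h) - (g - T 1 * h) = 2 * (T 1 * h) := by ring
      rw [h1]
      have h2 : T (-1) * (⅟(2:LaurentPolynomial A) * (2 * (T 1 * h)))
          = (⅟(2:LaurentPolynomial A) * 2) * ((T (-1) * T 1) * h) := by ring
      rw [h2, invOf_mul_self, one_mul, ← T_add]
      norm_num [T_zero]
    apply Prod.ext
    · exact Subtype.ext hgval.symm
    · exact Subtype.ext hhval.symm
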